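/- Suppose L₀ is a sequential contraction of L. Then the dimensions of the terms of the upper central series do not decrease: for every l : ℕ, finrank ℝ (((⊥ : LieSubmodule ℝ L₀ L₀).ucs l) : Submodule ℝ L₀) ≥ finrank ℝ (((⊥ : LieSubmodule ℝ L L).ucs l) : Submodule ℝ L). In particular (l = 1) the dimension of the center of L₀ is at least the dimension of the center of L. -/

import Mathlib

open Filter Module

/-- `L₀` is a sequential contraction of the real Lie algebra `L`: there is a sequence of
real-linear equivalences `T p : L ≃ₗ[ℝ] L₀` such that the transported brackets converge to the
bracket of `L₀`. -/
def IsSequentialContraction (L L₀ : Type*) [LieRing L] [LieAlgebra ℝ L]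
    [LieRing L₀] [LieAlgebra ℝ L₀] [TopologicalSpace L₀] : Prop :=
  ∃ T : ℕ → (L ≃ₗ[ℝ] L₀), ∀ x y : L₀,
    Tendsto (fun p => T p ⁅(T p).symm x, (T p).symm y⁆) atTop (nhds ⁅x, y⁆)

/-- Pointwise convergence of linear maps on a finite-dimensional space, together with
convergence of arguments, gives convergence of values. -/
lemma tendsto_linearMap_apply {L₀ : Type*} [AddCommGroup L₀] [Module ℝ L₀]
    [Module.Finite ℝ L₀]
    [TopologicalSpace L₀] [IsTopologicalAddGroup L₀] [ContinuousSMul ℝ L₀] [T2Space L₀]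
    (f : ℕ → (L₀ →ₗ[ℝ] L₀)) (g : L₀ →ₗ[ℝ] L₀)
    (hf : ∀ v, Tendsto (fun p => f p v) atTop (nhds (g v)))
    {z : ℕ → L₀} {w : L₀} (hz : Tendsto z atTop (nhds w)) :
    Tendsto (fun p => f p (z p)) atTop (nhds (g w)) := by
  have b := Module.finBasis ℝ L₀
  have hrepr : ∀ (F : L₀ →ₗ[ℝ] L₀) (v : L₀), F v = ∑ i, b.repr v i • F (b i) := by
    intro F v
    conv_lhs => rw [← b.sum_repr v]
    rw [map_sum]; simp only [map_smul]
  have h1 : ∀ i, Tendsto (fun p => b.repr (z p) i) atTop (nhds (b.repr w i)) := by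
    intro i
    have hc : Continuous fun v : L₀ => b.repr v i :=
      (b.coord i).continuous_of_finiteDimensional
    exact (hc.tendsto w).comp hz
  have : Tendsto (fun p => ∑ i, b.repr (z p) i • f p (b i)) atTop
      (nhds (∑ i, b.repr w i • g (b i))) := by
    refine tendsto_finset_sum _ fun i _ => ?_
    exact (h1 i).smul (hf (b i))
  refine this.congr' ?_ |>.mono_right (le_of_eq ?_)
  · filter_upwards with p using (hrepr (f p) (z p)).symm
  · rw [← hrepr g w]

lemma mem_ucs_of_tendsto {L L₀ : Type*} [LieRing L] [LieAlgebra ℝ L] [LieRing L₀]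
    [LieAlgebra ℝ L₀] [Module.Finite ℝ L₀]
    [TopologicalSpace L₀] [IsTopologicalAddGroup L₀] [ContinuousSMul ℝ L₀] [T2Space L₀]
    (T : ℕ → (L ≃ₗ[ℝ] L₀))
    (hT : ∀ x y : L₀, Tendsto (fun p => T p ⁅(T p).symm x, (T p).symm y⁆) atTop (nhds ⁅x, y⁆)) :
    ∀ (l : ℕ) (z : ℕ → L₀) (w : L₀),
      (∀ p, (T p).symm (z p) ∈ (((⊥ : LieSubmodule ℝ L L).ucs l : LieSubmodule ℝ L L))) →
      Tendsto z atTop (nhds w) →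
      w ∈ ((⊥ : LieSubmodule ℝ L₀ L₀).ucs l : LieSubmodule ℝ L₀ L₀) := by
  intro l
  induction l with
  | zero =>
    intro z w hz hlim
    simp only [LieSubmodule.ucs_zero, LieSubmodule.mem_bot] at hz ⊢
    have hz0 : ∀ p, z p = 0 := by
      intro p
      have := hz p
      have : z p = T p 0 := by rw [← this]; simp
      simpa using this
    have : Tendsto z atTop (nhds (0 : L₀)) := by
      simpa [funext hz0] using tendsto_const_nhds (α := ℕ) (x := (0 : L₀))
    exact tendsto_nhds_unique hlim this
  | succ l ih =>
    intro z w hz hlim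
    rw [LieSubmodule.ucs_succ, LieSubmodule.mem_normalizer]
    intro y
    refine ih (fun p => T p ⁅(T p).symm y, (T p).symm (z p)⁆) ⁅y, w⁆ ?_ ?_
    · intro p
      have hmem := hz p
      rw [LieSubmodule.ucs_succ, LieSubmodule.mem_normalizer] at hmem
      simpa using hmem ((T p).symm y)
    · -- convergence via the linear-map lemma
      set f : ℕ → (L₀ →ₗ[ℝ] L₀) := fun p =>
        (T p).toLinearMap ∘ₗ (LieAlgebra.ad ℝ L ((T p).symm y)) ∘ₗ (T p).symm.toLinearMap with hf
      have := tendsto_linearMap_apply f (LieAlgebra.ad ℝ L₀ y)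
        (fun v => by simpa [hf] using hT y v) hlim
      simpa [hf] using this

/-- Under a sequential contraction, the dimensions of the terms of the upper central series do
not decrease. -/
theorem ucs_finrank_le_of_contraction {L L₀ : Type*} [LieRing L] [LieAlgebra ℝ L] [LieRing L₀] [LieAlgebra ℝ L₀]
    [Module.Finite ℝ L] [Module.Finite ℝ L₀]
    [TopologicalSpace L₀] [IsTopologicalAddGroup L₀] [ContinuousSMul ℝ L₀] [T2Space L₀]
    (h : IsSequentialContraction L L₀) :
    ∀ l : ℕ,
      finrank ℝ (((⊥ : LieSubmodule ℝ L₀ L₀).ucs l : LieSubmodule ℝ L₀ L₀) : Submodule ℝ L₀) ≥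
        finrank ℝ (((⊥ : LieSubmodule ℝ L L).ucs l : LieSubmodule ℝ L L) : Submodule ℝ L) := by
  obtain ⟨T, hT⟩ := h
  intro l
  classical
  set n := finrank ℝ L₀ with hn
  set E := EuclideanSpace ℝ (Fin n) with hE
  -- a linear equivalence between L₀ and Euclidean space
  let le : L₀ ≃ₗ[ℝ] E :=
    (Module.finBasis ℝ L₀).equivFun.trans (EuclideanSpace.equiv (Fin n) ℝ).symm.toLinearEquiv
  have hle_cont : Continuous le.symm := le.symm.toLinearMap.continuous_of_finiteDimensional
  set S : Submodule ℝ L := (((⊥ : LieSubmodule ℝ L L).ucs l : LieSubmodule ℝ L L) : Submodule ℝ L)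
    with hS
  set d := finrank ℝ S with hd
  let C : ℕ → (L ≃ₗ[ℝ] E) := fun q => (T q).trans le
  let V : ℕ → Submodule ℝ E := fun q => S.map (C q).toLinearMap
  have hdim : ∀ q, finrank ℝ (V q) = d := fun q => LinearEquiv.finrank_map_eq (C q) S
  -- orthonormal bases of the subspaces V q
  let ob : ∀ q, OrthonormalBasis (Fin d) ℝ (V q) := fun q =>
    (stdOrthonormalBasis ℝ (V q)).reindex (finCongr (hdim q))
  let u : ℕ → Fin d → E := fun q i => ((ob q) i : E)
  have hu_mem : ∀ q i, u q i ∈ V q := fun q i => SetLike.coe_mem _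
  have hu_inner : ∀ q i j, inner ℝ (u q i) (u q j) = if i = j then (1 : ℝ) else 0 := by
    intro q i j
    have := orthonormal_iff_ite.1 (ob q).orthonormal i j
    simpa [u, Submodule.coe_inner] using this
  -- extract a convergent subsequence of the tuples of basis vectors
  have hs : IsCompact (Set.pi Set.univ fun _ : Fin d => Metric.closedBall (0 : E) 1) :=
    isCompact_univ_pi fun _ => isCompact_closedBall _ _
  have hx : ∀ q, u q ∈ Set.pi Set.univ fun _ : Fin d => Metric.closedBall (0 : E) 1 := by
    intro q
    intro i _
    have : ‖u q i‖ = 1 := by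
      have := (ob q).orthonormal.1 i
      exact this
    simp [mem_closedBall_zero_iff, this]
  obtain ⟨a, _, φ, hφ, hconv⟩ := hs.tendsto_subseq hx
  have htend : ∀ i, Tendsto (fun p => u (φ p) i) atTop (nhds (a i)) := by
    intro i
    exact (tendsto_pi_nhds.1 hconv) i
  -- the limit tuple is orthonormal
  have ha : Orthonormal ℝ a := by
    rw [orthonormal_iff_ite]
    intro i j
    have h1 : Tendsto (fun p => inner ℝ (u (φ p) i) (u (φ p) j) : ℕ → ℝ) atTop
        (nhds (inner ℝ (a i) (a j))) := (htend i).inner (htend j)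
    have h2 : Tendsto (fun p => inner ℝ (u (φ p) i) (u (φ p) j) : ℕ → ℝ) atTop
        (nhds (if i = j then (1 : ℝ) else 0)) := by
      have : (fun p => (inner ℝ (u (φ p) i) (u (φ p) j) : ℝ)) =
          fun _ => if i = j then (1 : ℝ) else 0 := by
        funext p; exact hu_inner (φ p) i j
      rw [this]; exact tendsto_const_nhds
    exact tendsto_nhds_unique h1 h2
  -- the pulled-back limit vectors
  set w : Fin d → L₀ := fun i => le.symm (a i) with hw
  -- each w i lies in the ucs term of L₀
  have hT' : ∀ x y : L₀,
      Tendsto (fun p => T (φ p) ⁅(T (φ p)).symm x, (T (φ p)).symm y⁆) atTop (nhds ⁅x, y⁆) :=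
    fun x y => (hT x y).comp hφ.tendsto_atTop
  have hwmem : ∀ i, w i ∈ ((⊥ : LieSubmodule ℝ L₀ L₀).ucs l : LieSubmodule ℝ L₀ L₀) := by
    intro i
    refine mem_ucs_of_tendsto (fun p => T (φ p)) hT' l (fun p => le.symm (u (φ p) i)) (w i) ?_ ?_
    · intro p
      obtain ⟨m, hm, hCm⟩ := Submodule.mem_map.1 (hu_mem (φ p) i)
      have : (T (φ p)).symm (le.symm (u (φ p) i)) = m := by
        rw [← hCm]; simp [C]
      rw [this]; exact hm
    · exact (hle_cont.tendsto (a i)).comp (htend i)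
  -- linear independence and the dimension count
  have hli : LinearIndependent ℝ w := by
    have := (ha.linearIndependent).map' le.symm.toLinearMap (LinearMap.ker_eq_bot.2 le.symm.injective)
    exact this
  have hspan : finrank ℝ (Submodule.span ℝ (Set.range w)) = d := by
    rw [finrank_span_eq_card hli, Fintype.card_fin]
  have hle2 : Submodule.span ℝ (Set.range w) ≤
      (((⊥ : LieSubmodule ℝ L₀ L₀).ucs l : LieSubmodule ℝ L₀ L₀) : Submodule ℝ L₀) := by
    rw [Submodule.span_le]
    rintro x ⟨i, rfl⟩
    exact hwmem i
  calc finrank ℝ S = finrank ℝ (Submodule.span ℝ (Set.range w)) := hspan.symm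
    _ ≤ finrank ℝ (((⊥ : LieSubmodule ℝ L₀ L₀).ucs l : LieSubmodule ℝ L₀ L₀) : Submodule ℝ L₀) :=
        Submodule.finrank_mono hle2
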